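/- (Oracle DRIV loss decomposition; projections on arbitrary model spaces.) Assume β0(X) ≥ β_min almost surely for some constant β_min > 0, let θ_pre be any bounded measurable function of X, and set Y_DR = θ_pre(X) + (Y − q0(X) − θ_pre(X)·(T − p0(X)))·(Z − r0(X)) / β0(X). Then E[Y_DR | X] = θ0(X) almost surely, and consequently for every bounded measurable function θ of X, E[(Y_DR − θ(X))²] = E[(Y_DR − θ0(X))²] + E[(θ0(X) − θ(X))²]; hence minimizing the oracle DRIV loss over any class of functions of X is equivalent to minimizing E[(θ0(X) − θ(X))²], i.e., to projecting θ0 onto that class. -/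

import Mathlib

open MeasureTheory

private lemma int_of_bdd {Ω : Type*} [MeasurableSpace Ω] {μ : Measure Ω}
    [IsFiniteMeasure μ] {f : Ω → ℝ} (hf : Measurable f) {C : ℝ}
    (h : ∀ᵐ ω ∂μ, |f ω| ≤ C) : Integrable f μ :=
  (integrable_const C).mono' hf.aestronglyMeasurable (by simpa [Real.norm_eq_abs] using h)

theorem stmt_11
    {Ω 𝓧 : Type*} [MeasurableSpace Ω] [MeasurableSpace 𝓧] [StandardBorelSpace 𝓧]
    (μ : Measure Ω) [IsProbabilityMeasure μ]
    (Y T Z : Ω → ℝ) (X : Ω → 𝓧)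
    (hY : Measurable Y) (hT : Measurable T) (hZ : Measurable Z) (hX : Measurable X)
    (hYbdd : ∃ C, ∀ ω, |Y ω| ≤ C) (hTbdd : ∃ C, ∀ ω, |T ω| ≤ C)
    (hZbdd : ∃ C, ∀ ω, |Z ω| ≤ C)
    (θ0 f0 : 𝓧 → ℝ) (hθ0m : Measurable θ0) (hf0m : Measurable f0)
    (hθ0bdd : ∃ C, ∀ x, |θ0 x| ≤ C) (hf0bdd : ∃ C, ∀ x, |f0 x| ≤ C)
    (hIV : μ[fun ω => Y ω - θ0 (X ω) * T ω - f0 (X ω) |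
        MeasurableSpace.comap (fun ω => (Z ω, X ω)) inferInstance] =ᵐ[μ] 0)
    (q0 p0 r0 : 𝓧 → ℝ) (hq0m : Measurable q0) (hp0m : Measurable p0) (hr0m : Measurable r0)
    (hq0bdd : ∃ C, ∀ x, |q0 x| ≤ C) (hp0bdd : ∃ C, ∀ x, |p0 x| ≤ C)
    (hr0bdd : ∃ C, ∀ x, |r0 x| ≤ C)
    (hq0 : (fun ω => q0 (X ω)) =ᵐ[μ] μ[Y | MeasurableSpace.comap X inferInstance])
    (hp0 : (fun ω => p0 (X ω)) =ᵐ[μ] μ[T | MeasurableSpace.comap X inferInstance])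
    (hr0 : (fun ω => r0 (X ω)) =ᵐ[μ] μ[Z | MeasurableSpace.comap X inferInstance])
    (h0 : ℝ × 𝓧 → ℝ) (hh0m : Measurable h0) (hh0bdd : ∃ C, ∀ zx, |h0 zx| ≤ C)
    (hh0 : (fun ω => h0 (Z ω, X ω)) =ᵐ[μ]
        μ[T | MeasurableSpace.comap (fun ω => (Z ω, X ω)) inferInstance])
    (β0 : 𝓧 → ℝ) (hβ0m : Measurable β0) (hβ0bdd : ∃ C, ∀ x, |β0 x| ≤ C)
    (hβ0 : (fun ω => β0 (X ω)) =ᵐ[μ]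
        μ[fun ω => (T ω - p0 (X ω)) * (Z ω - r0 (X ω)) | MeasurableSpace.comap X inferInstance])
    (V0 : 𝓧 → ℝ) (hV0m : Measurable V0) (hV0bdd : ∃ C, ∀ x, |V0 x| ≤ C)
    (hV0 : (fun ω => V0 (X ω)) =ᵐ[μ]
        μ[fun ω => (h0 (Z ω, X ω) - p0 (X ω)) ^ 2 | MeasurableSpace.comap X inferInstance])
    (βmin : ℝ) (hβmin : 0 < βmin) (hβlb : ∀ᵐ ω ∂μ, βmin ≤ β0 (X ω))
    (θpre : 𝓧 → ℝ) (hθprem : Measurable θpre) (hθprebdd : ∃ C, ∀ x, |θpre x| ≤ C) :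
    (μ[fun ω => θpre (X ω) + (Y ω - q0 (X ω) - θpre (X ω) * (T ω - p0 (X ω))) * (Z ω - r0 (X ω)) / β0 (X ω) | MeasurableSpace.comap X inferInstance] =ᵐ[μ] (fun ω => θ0 (X ω)))
    ∧ ∀ θ : 𝓧 → ℝ, Measurable θ → (∃ C, ∀ x, |θ x| ≤ C) →
        (∫ ω, ((θpre (X ω) + (Y ω - q0 (X ω) - θpre (X ω) * (T ω - p0 (X ω))) * (Z ω - r0 (X ω)) / β0 (X ω)) - θ (X ω)) ^ 2 ∂μ)
          = (∫ ω, ((θpre (X ω) + (Y ω - q0 (X ω) - θpre (X ω) * (T ω - p0 (X ω))) * (Z ω - r0 (X ω)) / β0 (X ω)) - θ0 (X ω)) ^ 2 ∂μ) + ∫ ω, (θ0 (X ω) - θ (X ω)) ^ 2 ∂μ := by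
  classical
  obtain ⟨Cy, hCy⟩ := hYbdd
  obtain ⟨Ct, hCt⟩ := hTbdd
  obtain ⟨Cz, hCz⟩ := hZbdd
  obtain ⟨Cθ0, hCθ0⟩ := hθ0bdd
  obtain ⟨Cf, hCf⟩ := hf0bdd
  obtain ⟨Cq, hCq⟩ := hq0bdd
  obtain ⟨Cp, hCp⟩ := hp0bdd
  obtain ⟨Cr, hCr⟩ := hr0bdd
  obtain ⟨Cpre, hCpre⟩ := hθprebdd
  have hΩ : Nonempty Ω := by
    by_contra h
    rw [not_nonempty_iff] at h
    have h1 : μ Set.univ = 1 := measure_univ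
    rw [Set.univ_eq_empty_iff.mpr h] at h1
    simp at h1
  have h𝓧 : Nonempty 𝓧 := ⟨X hΩ.some⟩
  have hCy0 : 0 ≤ Cy := (abs_nonneg _).trans (hCy hΩ.some)
  have hCt0 : 0 ≤ Ct := (abs_nonneg _).trans (hCt hΩ.some)
  have hCz0 : 0 ≤ Cz := (abs_nonneg _).trans (hCz hΩ.some)
  have hCθ00 : 0 ≤ Cθ0 := (abs_nonneg _).trans (hCθ0 h𝓧.some)
  have hCf0 : 0 ≤ Cf := (abs_nonneg _).trans (hCf h𝓧.some)
  have hCq0 : 0 ≤ Cq := (abs_nonneg _).trans (hCq h𝓧.some)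
  have hCp0 : 0 ≤ Cp := (abs_nonneg _).trans (hCp h𝓧.some)
  have hCr0 : 0 ≤ Cr := (abs_nonneg _).trans (hCr h𝓧.some)
  have hCpre0 : 0 ≤ Cpre := (abs_nonneg _).trans (hCpre h𝓧.some)
  -- measurability of basic pieces
  have hr0X : Measurable fun ω => r0 (X ω) := hr0m.comp hX
  have hDmeas : Measurable fun ω => Y ω - θ0 (X ω) * T ω - f0 (X ω) :=
    (hY.sub ((hθ0m.comp hX).mul hT)).sub (hf0m.comp hX)
  have hKmeas : Measurable fun ω => (T ω - p0 (X ω)) * (Z ω - r0 (X ω)) :=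
    (hT.sub (hp0m.comp hX)).mul (hZ.sub hr0X)
  have hFmeas : Measurable fun ω =>
      θpre (X ω) + (Y ω - q0 (X ω) - θpre (X ω) * (T ω - p0 (X ω))) * (Z ω - r0 (X ω)) / β0 (X ω) :=
    (hθprem.comp hX).add
      ((((hY.sub (hq0m.comp hX)).sub ((hθprem.comp hX).mul (hT.sub (hp0m.comp hX)))).mul
        (hZ.sub hr0X)).div (hβ0m.comp hX))
  have hg : Measurable fun p : ℝ × 𝓧 => (p.1 - r0 p.2) / β0 p.2 :=
    (measurable_fst.sub (hr0m.comp measurable_snd)).div (hβ0m.comp measurable_snd)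
  have hm : MeasurableSpace.comap X inferInstance ≤ (inferInstance : MeasurableSpace Ω) :=
    hX.comap_le
  have hmZX : MeasurableSpace.comap (fun ω => (Z ω, X ω)) inferInstance ≤
      (inferInstance : MeasurableSpace Ω) := (hZ.prodMk hX).comap_le
  have hm_le : MeasurableSpace.comap X inferInstance ≤
      MeasurableSpace.comap (fun ω => (Z ω, X ω)) inferInstance := by
    calc MeasurableSpace.comap X inferInstance
        = MeasurableSpace.comap (fun ω => (Z ω, X ω))
            (MeasurableSpace.comap Prod.snd inferInstance) := by
          rw [MeasurableSpace.comap_comp]; rfl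
      _ ≤ MeasurableSpace.comap (fun ω => (Z ω, X ω)) inferInstance :=
          MeasurableSpace.comap_mono measurable_snd.comap_le
  haveI hσm : SigmaFinite (μ.trim hm) := inferInstance
  haveI hσmZX : SigmaFinite (μ.trim hmZX) := inferInstance
  have hXm : Measurable[MeasurableSpace.comap X inferInstance] X :=
    Measurable.of_comap_le le_rfl
  have hZXm : Measurable[MeasurableSpace.comap (fun ω => (Z ω, X ω)) inferInstance]
      (fun ω => (Z ω, X ω)) := Measurable.of_comap_le le_rfl
  -- pointwise bounds
  have hDb : ∀ ω, |Y ω - θ0 (X ω) * T ω - f0 (X ω)| ≤ Cy + Cθ0 * Ct + Cf := by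
    intro ω
    have h1 : |θ0 (X ω) * T ω| ≤ Cθ0 * Ct := by
      rw [abs_mul]; exact mul_le_mul (hCθ0 _) (hCt _) (abs_nonneg _) hCθ00
    calc |Y ω - θ0 (X ω) * T ω - f0 (X ω)|
        ≤ |Y ω - θ0 (X ω) * T ω| + |f0 (X ω)| := abs_sub _ _
      _ ≤ (|Y ω| + |θ0 (X ω) * T ω|) + |f0 (X ω)| :=
          add_le_add_left (abs_sub _ _) _
      _ ≤ Cy + Cθ0 * Ct + Cf := add_le_add (add_le_add (hCy ω) h1) (hCf _)
  have hZrb : ∀ ω, |Z ω - r0 (X ω)| ≤ Cz + Cr :=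
    fun ω => (abs_sub _ _).trans (add_le_add (hCz ω) (hCr _))
  have hTpb : ∀ ω, |T ω - p0 (X ω)| ≤ Ct + Cp :=
    fun ω => (abs_sub _ _).trans (add_le_add (hCt ω) (hCp _))
  have hKb : ∀ ω, |(T ω - p0 (X ω)) * (Z ω - r0 (X ω))| ≤ (Ct + Cp) * (Cz + Cr) := by
    intro ω
    rw [abs_mul]
    exact mul_le_mul (hTpb ω) (hZrb ω) (abs_nonneg _) (by linarith)
  have hθθpb : ∀ ω, |θ0 (X ω) - θpre (X ω)| ≤ Cθ0 + Cpre :=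
    fun ω => (abs_sub _ _).trans (add_le_add (hCθ0 _) (hCpre _))
  have hcb : ∀ ω, |θ0 (X ω) * p0 (X ω) + f0 (X ω) - q0 (X ω)| ≤ Cθ0 * Cp + Cf + Cq := by
    intro ω
    have h1 : |θ0 (X ω) * p0 (X ω)| ≤ Cθ0 * Cp := by
      rw [abs_mul]; exact mul_le_mul (hCθ0 _) (hCp _) (abs_nonneg _) hCθ00
    calc |θ0 (X ω) * p0 (X ω) + f0 (X ω) - q0 (X ω)|
        ≤ |θ0 (X ω) * p0 (X ω) + f0 (X ω)| + |q0 (X ω)| := abs_sub _ _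
      _ ≤ (|θ0 (X ω) * p0 (X ω)| + |f0 (X ω)|) + |q0 (X ω)| :=
          add_le_add_left (abs_add_le _ _) _
      _ ≤ Cθ0 * Cp + Cf + Cq := add_le_add (add_le_add h1 (hCf _)) (hCq _)
  -- a.e. bound helper for terms of the form (u/β0∘X) * v
  have hmulb : ∀ (u v : Ω → ℝ) (Cu Cv : ℝ), 0 ≤ Cu → (∀ ω, |u ω| ≤ Cu) → (∀ ω, |v ω| ≤ Cv) →
      ∀ᵐ ω ∂μ, |u ω / β0 (X ω) * v ω| ≤ Cu / βmin * Cv := by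
    intro u v Cu Cv hCu hu hv
    filter_upwards [hβlb] with ω h
    have h0 : 0 < β0 (X ω) := hβmin.trans_le h
    rw [abs_mul, abs_div, abs_of_pos h0]
    exact mul_le_mul (div_le_div₀ hCu (hu ω) hβmin h) (hv ω) (abs_nonneg _)
      (div_nonneg hCu hβmin.le)
  -- integrability
  have intθpreX : Integrable (fun ω => θpre (X ω)) μ :=
    int_of_bdd (hθprem.comp hX) (ae_of_all _ fun ω => hCpre _)
  have intθ0X : Integrable (fun ω => θ0 (X ω)) μ :=
    int_of_bdd (hθ0m.comp hX) (ae_of_all _ fun ω => hCθ0 _)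
  have intD : Integrable (fun ω => Y ω - θ0 (X ω) * T ω - f0 (X ω)) μ :=
    int_of_bdd hDmeas (ae_of_all _ hDb)
  have intZ : Integrable Z μ := int_of_bdd hZ (ae_of_all _ hCz)
  have intr0X : Integrable (fun ω => r0 (X ω)) μ :=
    int_of_bdd hr0X (ae_of_all _ fun ω => hCr _)
  have intK : Integrable (fun ω => (T ω - p0 (X ω)) * (Z ω - r0 (X ω))) μ :=
    int_of_bdd hKmeas (ae_of_all _ hKb)
  have intB1 : Integrable ((fun ω => (Z ω - r0 (X ω)) / β0 (X ω)) *
      (fun ω => Y ω - θ0 (X ω) * T ω - f0 (X ω))) μ := by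
    refine int_of_bdd (C := (Cz + Cr) / βmin * (Cy + Cθ0 * Ct + Cf)) ?_ ?_
    · exact Measurable.mul ((hZ.sub hr0X).div (hβ0m.comp hX)) hDmeas
    · filter_upwards [hmulb (fun ω => Z ω - r0 (X ω))
        (fun ω => Y ω - θ0 (X ω) * T ω - f0 (X ω)) (Cz + Cr) (Cy + Cθ0 * Ct + Cf)
        (by linarith) hZrb hDb] with ω h
      simpa [Pi.mul_apply] using h
  have intB2 : Integrable ((fun ω => (θ0 (X ω) - θpre (X ω)) / β0 (X ω)) *
      (fun ω => (T ω - p0 (X ω)) * (Z ω - r0 (X ω)))) μ := by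
    refine int_of_bdd (C := (Cθ0 + Cpre) / βmin * ((Ct + Cp) * (Cz + Cr))) ?_ ?_
    · exact Measurable.mul (((hθ0m.comp hX).sub (hθprem.comp hX)).div (hβ0m.comp hX)) hKmeas
    · filter_upwards [hmulb (fun ω => θ0 (X ω) - θpre (X ω))
        (fun ω => (T ω - p0 (X ω)) * (Z ω - r0 (X ω))) (Cθ0 + Cpre) ((Ct + Cp) * (Cz + Cr))
        (by linarith) hθθpb hKb] with ω h
      simpa [Pi.mul_apply] using h
  have intB3 : Integrable ((fun ω => (θ0 (X ω) * p0 (X ω) + f0 (X ω) - q0 (X ω)) / β0 (X ω)) *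
      (Z - fun ω => r0 (X ω))) μ := by
    refine int_of_bdd (C := (Cθ0 * Cp + Cf + Cq) / βmin * (Cz + Cr)) ?_ ?_
    · exact Measurable.mul
        ((((hθ0m.comp hX).mul (hp0m.comp hX)).add (hf0m.comp hX) |>.sub (hq0m.comp hX)).div
          (hβ0m.comp hX)) (hZ.sub hr0X)
    · filter_upwards [hmulb (fun ω => θ0 (X ω) * p0 (X ω) + f0 (X ω) - q0 (X ω))
        (fun ω => Z ω - r0 (X ω)) (Cθ0 * Cp + Cf + Cq) (Cz + Cr)
        (by nlinarith) hcb hZrb] with ω h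
      simpa [Pi.mul_apply, Pi.sub_apply] using h
  -- conditional expectations of the three correction terms
  have smG : StronglyMeasurable[(MeasurableSpace.comap (fun ω => (Z ω, X ω)) inferInstance)] fun ω => (Z ω - r0 (X ω)) / β0 (X ω) :=
    (hg.comp hZXm).stronglyMeasurable
  have hB1cond : μ[(fun ω => (Z ω - r0 (X ω)) / β0 (X ω)) *
      (fun ω => Y ω - θ0 (X ω) * T ω - f0 (X ω)) | (MeasurableSpace.comap (fun ω => (Z ω, X ω)) inferInstance)] =ᵐ[μ] 0 := by
    refine (condExp_mul_of_stronglyMeasurable_left smG intB1 intD).trans ?_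
    filter_upwards [hIV] with ω h
    simp only [Pi.zero_apply] at h ⊢
    simp only [Pi.mul_apply, h, mul_zero]
  have hB1m : μ[(fun ω => (Z ω - r0 (X ω)) / β0 (X ω)) *
      (fun ω => Y ω - θ0 (X ω) * T ω - f0 (X ω)) | (MeasurableSpace.comap X inferInstance)] =ᵐ[μ] 0 := by
    refine (condExp_condExp_of_le hm_le hmZX).symm.trans ?_
    refine (condExp_congr_ae hB1cond).trans ?_
    rw [condExp_zero]
  have smf2 : StronglyMeasurable[(MeasurableSpace.comap X inferInstance)] fun ω => (θ0 (X ω) - θpre (X ω)) / β0 (X ω) :=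
    (((hθ0m.sub hθprem).div hβ0m).comp hXm).stronglyMeasurable
  have hB2m : μ[(fun ω => (θ0 (X ω) - θpre (X ω)) / β0 (X ω)) *
      (fun ω => (T ω - p0 (X ω)) * (Z ω - r0 (X ω))) | (MeasurableSpace.comap X inferInstance)] =ᵐ[μ]
      fun ω => θ0 (X ω) - θpre (X ω) := by
    refine (condExp_mul_of_stronglyMeasurable_left smf2 intB2 intK).trans ?_
    filter_upwards [hβ0, hβlb] with ω h1 h2
    have h0 : β0 (X ω) ≠ 0 := (hβmin.trans_le h2).ne'
    have h1' : (μ[fun ω => (T ω - p0 (X ω)) * (Z ω - r0 (X ω)) | (MeasurableSpace.comap X inferInstance)]) ω = β0 (X ω) := h1.symm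
    simp only [Pi.mul_apply, h1']
    exact div_mul_cancel₀ _ h0
  have smr0X : StronglyMeasurable[(MeasurableSpace.comap X inferInstance)] fun ω => r0 (X ω) :=
    (hr0m.comp hXm).stronglyMeasurable
  have hZr0cond : μ[Z - (fun ω => r0 (X ω)) | (MeasurableSpace.comap X inferInstance)] =ᵐ[μ] 0 := by
    refine (condExp_sub intZ intr0X _).trans ?_
    rw [condExp_of_stronglyMeasurable hm smr0X intr0X]
    filter_upwards [hr0] with ω h
    have h' : r0 (X ω) = (μ[Z | (MeasurableSpace.comap X inferInstance)]) ω := h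
    simp only [Pi.sub_apply, Pi.zero_apply, h', sub_self]
  have smf3 : StronglyMeasurable[(MeasurableSpace.comap X inferInstance)]
      fun ω => (θ0 (X ω) * p0 (X ω) + f0 (X ω) - q0 (X ω)) / β0 (X ω) :=
    ((((hθ0m.mul hp0m).add hf0m |>.sub hq0m).div hβ0m).comp hXm).stronglyMeasurable
  have hB3m : μ[(fun ω => (θ0 (X ω) * p0 (X ω) + f0 (X ω) - q0 (X ω)) / β0 (X ω)) *
      (Z - fun ω => r0 (X ω)) | (MeasurableSpace.comap X inferInstance)] =ᵐ[μ] 0 := by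
    refine (condExp_mul_of_stronglyMeasurable_left smf3 intB3 (intZ.sub intr0X)).trans ?_
    filter_upwards [hZr0cond] with ω h
    simp only [Pi.zero_apply] at h ⊢
    simp only [Pi.mul_apply, h, mul_zero]
  have hAcond : μ[(fun ω => θpre (X ω)) | (MeasurableSpace.comap X inferInstance)] = fun ω => θpre (X ω) :=
    condExp_of_stronglyMeasurable hm ((hθprem.comp hXm).stronglyMeasurable) intθpreX
  set F : Ω → ℝ := fun ω =>
    θpre (X ω) + (Y ω - q0 (X ω) - θpre (X ω) * (T ω - p0 (X ω))) * (Z ω - r0 (X ω)) / β0 (X ω)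
    with hF
  have hsplit : F = (fun ω => θpre (X ω)) +
      ((fun ω => (Z ω - r0 (X ω)) / β0 (X ω)) * (fun ω => Y ω - θ0 (X ω) * T ω - f0 (X ω)) +
        ((fun ω => (θ0 (X ω) - θpre (X ω)) / β0 (X ω)) *
            (fun ω => (T ω - p0 (X ω)) * (Z ω - r0 (X ω))) +
          (fun ω => (θ0 (X ω) * p0 (X ω) + f0 (X ω) - q0 (X ω)) / β0 (X ω)) *
            (Z - fun ω => r0 (X ω)))) := by
    funext ω
    simp only [hF, Pi.add_apply, Pi.mul_apply, Pi.sub_apply]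
    ring
  have part1 : μ[F | (MeasurableSpace.comap X inferInstance)] =ᵐ[μ] fun ω => θ0 (X ω) := by
    rw [hsplit]
    have e1 := condExp_add (μ := μ) (m := (MeasurableSpace.comap X inferInstance)) intθpreX (intB1.add (intB2.add intB3))
    rw [hAcond] at e1
    refine e1.trans ?_
    have e2 := condExp_add (μ := μ) (m := (MeasurableSpace.comap X inferInstance)) intB1 (intB2.add intB3)
    have e3 := condExp_add (μ := μ) (m := (MeasurableSpace.comap X inferInstance)) intB2 intB3
    filter_upwards [e2, e3, hB1m, hB2m, hB3m] with ω h2 h3 hb1 hb2 hb3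
    simp only [Pi.add_apply, Pi.zero_apply] at h2 h3 hb1 hb2 hb3 ⊢
    rw [h2, h3, hb1, hb2, hb3]
    ring
  refine ⟨part1, ?_⟩
  intro θ hθm hθbdd
  obtain ⟨Cθ, hCθ⟩ := hθbdd
  have hCθ0' : 0 ≤ Cθ := (abs_nonneg _).trans (hCθ h𝓧.some)
  have intθX : Integrable (fun ω => θ (X ω)) μ :=
    int_of_bdd (hθm.comp hX) (ae_of_all _ fun ω => hCθ _)
  have intF : Integrable F μ := by
    rw [hsplit]
    exact intθpreX.add (intB1.add (intB2.add intB3))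
  have hRb : ∀ ω, |Y ω - q0 (X ω) - θpre (X ω) * (T ω - p0 (X ω))| ≤
      Cy + Cq + Cpre * (Ct + Cp) := by
    intro ω
    have h1 : |θpre (X ω) * (T ω - p0 (X ω))| ≤ Cpre * (Ct + Cp) := by
      rw [abs_mul]; exact mul_le_mul (hCpre _) (hTpb ω) (abs_nonneg _) hCpre0
    calc |Y ω - q0 (X ω) - θpre (X ω) * (T ω - p0 (X ω))|
        ≤ |Y ω - q0 (X ω)| + |θpre (X ω) * (T ω - p0 (X ω))| := abs_sub _ _
      _ ≤ (|Y ω| + |q0 (X ω)|) + Cpre * (Ct + Cp) := add_le_add (abs_sub _ _) h1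
      _ ≤ Cy + Cq + Cpre * (Ct + Cp) := by
          have := hCy ω; have := hCq (X ω); linarith
  have hnum : 0 ≤ Cy + Cq + Cpre * (Ct + Cp) := by
    have := mul_nonneg hCpre0 (by linarith : (0:ℝ) ≤ Ct + Cp); linarith
  set CF : ℝ := Cpre + (Cy + Cq + Cpre * (Ct + Cp)) * (Cz + Cr) / βmin with hCF
  have hCF0 : 0 ≤ CF := by
    rw [hCF]
    have := div_nonneg (mul_nonneg hnum (by linarith : (0:ℝ) ≤ Cz + Cr)) hβmin.le
    linarith
  have hFb : ∀ᵐ ω ∂μ, |F ω| ≤ CF := by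
    filter_upwards [hβlb] with ω h
    have h0 : 0 < β0 (X ω) := hβmin.trans_le h
    simp only [hF]
    calc |θpre (X ω) +
          (Y ω - q0 (X ω) - θpre (X ω) * (T ω - p0 (X ω))) * (Z ω - r0 (X ω)) / β0 (X ω)|
        ≤ |θpre (X ω)| +
          |(Y ω - q0 (X ω) - θpre (X ω) * (T ω - p0 (X ω))) * (Z ω - r0 (X ω)) / β0 (X ω)| :=
          abs_add_le _ _
      _ ≤ Cpre + (Cy + Cq + Cpre * (Ct + Cp)) * (Cz + Cr) / βmin := by
          refine add_le_add (hCpre _) ?_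
          rw [abs_div, abs_of_pos h0, abs_mul]
          refine div_le_div₀ (mul_nonneg hnum (by linarith)) ?_ hβmin h
          exact mul_le_mul (hRb ω) (hZrb ω) (abs_nonneg _) hnum
      _ = CF := hCF.symm
  -- integrabilities of the quadratic pieces
  have hsq1 : Integrable (fun ω => (F ω - θ0 (X ω)) ^ 2) μ := by
    refine int_of_bdd (C := (CF + Cθ0) ^ 2) ((hFmeas.sub (hθ0m.comp hX)).pow_const 2) ?_
    filter_upwards [hFb] with ω h
    rw [abs_pow]
    exact pow_le_pow_left₀ (abs_nonneg _)
      ((abs_sub _ _).trans (add_le_add h (hCθ0 _))) 2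
  have hsqθ : Integrable (fun ω => (θ0 (X ω) - θ (X ω)) ^ 2) μ := by
    refine int_of_bdd (C := (Cθ0 + Cθ) ^ 2) (((hθ0m.comp hX).sub (hθm.comp hX)).pow_const 2) ?_
    refine ae_of_all _ fun ω => ?_
    rw [abs_pow]
    exact pow_le_pow_left₀ (abs_nonneg _)
      ((abs_sub _ _).trans (add_le_add (hCθ0 _) (hCθ _))) 2
  have hcrossint : Integrable
      ((fun ω => 2 * (θ0 (X ω) - θ (X ω))) * (F - fun ω => θ0 (X ω))) μ := by
    refine int_of_bdd (C := 2 * (Cθ0 + Cθ) * (CF + Cθ0)) ?_ ?_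
    · exact Measurable.mul (measurable_const.mul ((hθ0m.comp hX).sub (hθm.comp hX)))
        (hFmeas.sub (hθ0m.comp hX))
    · filter_upwards [hFb] with ω h
      simp only [Pi.mul_apply, Pi.sub_apply]
      rw [abs_mul]
      refine mul_le_mul ?_ ((abs_sub _ _).trans (add_le_add h (hCθ0 _))) (abs_nonneg _)
        (by nlinarith)
      rw [abs_mul, abs_two]
      exact mul_le_mul_of_nonneg_left
        ((abs_sub _ _).trans (add_le_add (hCθ0 _) (hCθ _))) (by norm_num)
  -- vanishing of the cross term
  have hWcond : μ[F - (fun ω => θ0 (X ω)) | (MeasurableSpace.comap X inferInstance)] =ᵐ[μ] 0 := by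
    refine (condExp_sub intF intθ0X _).trans ?_
    rw [condExp_of_stronglyMeasurable hm
      (show StronglyMeasurable[MeasurableSpace.comap X inferInstance] fun ω => θ0 (X ω) from
        (hθ0m.comp hXm).stronglyMeasurable) intθ0X]
    filter_upwards [part1] with ω h
    have h' : (μ[F | (MeasurableSpace.comap X inferInstance)]) ω = θ0 (X ω) := h
    simp only [Pi.sub_apply, Pi.zero_apply, h', sub_self]
  have smg : StronglyMeasurable[(MeasurableSpace.comap X inferInstance)] fun ω => 2 * (θ0 (X ω) - θ (X ω)) :=
    (((measurable_const.mul (hθ0m.sub hθm))).comp hXm).stronglyMeasurable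
  have hcross0 : μ[(fun ω => 2 * (θ0 (X ω) - θ (X ω))) * (F - fun ω => θ0 (X ω)) | (MeasurableSpace.comap X inferInstance)]
      =ᵐ[μ] 0 := by
    refine (condExp_mul_of_stronglyMeasurable_left smg hcrossint (intF.sub intθ0X)).trans ?_
    filter_upwards [hWcond] with ω h
    simp only [Pi.zero_apply] at h ⊢
    simp only [Pi.mul_apply, h, mul_zero]
  have hcross : ∫ ω, ((fun ω => 2 * (θ0 (X ω) - θ (X ω))) * (F - fun ω => θ0 (X ω))) ω ∂μ
      = 0 := by
    rw [← integral_condExp hm, integral_congr_ae hcross0]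
    simp
  calc ∫ ω, (θpre (X ω) +
          (Y ω - q0 (X ω) - θpre (X ω) * (T ω - p0 (X ω))) * (Z ω - r0 (X ω)) / β0 (X ω) -
          θ (X ω)) ^ 2 ∂μ
      = ∫ ω, ((F ω - θ0 (X ω)) ^ 2 +
          (((fun ω => 2 * (θ0 (X ω) - θ (X ω))) * (F - fun ω => θ0 (X ω))) ω +
            (θ0 (X ω) - θ (X ω)) ^ 2)) ∂μ := by
        refine integral_congr_ae (ae_of_all _ fun ω => ?_)
        simp only [hF, Pi.mul_apply, Pi.sub_apply]
        ring
    _ = (∫ ω, (F ω - θ0 (X ω)) ^ 2 ∂μ) +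
        ∫ ω, (((fun ω => 2 * (θ0 (X ω) - θ (X ω))) * (F - fun ω => θ0 (X ω))) ω +
          (θ0 (X ω) - θ (X ω)) ^ 2) ∂μ := integral_add hsq1 (hcrossint.add hsqθ)
    _ = (∫ ω, (F ω - θ0 (X ω)) ^ 2 ∂μ) +
        ((∫ ω, ((fun ω => 2 * (θ0 (X ω) - θ (X ω))) * (F - fun ω => θ0 (X ω))) ω ∂μ) +
          ∫ ω, (θ0 (X ω) - θ (X ω)) ^ 2 ∂μ) := by
        rw [integral_add hcrossint hsqθ]
    _ = (∫ ω, (F ω - θ0 (X ω)) ^ 2 ∂μ) + ∫ ω, (θ0 (X ω) - θ (X ω)) ^ 2 ∂μ := by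
        rw [hcross, zero_add]
    _ = (∫ ω, (θpre (X ω) +
          (Y ω - q0 (X ω) - θpre (X ω) * (T ω - p0 (X ω))) * (Z ω - r0 (X ω)) / β0 (X ω) -
          θ0 (X ω)) ^ 2 ∂μ) + ∫ ω, (θ0 (X ω) - θ (X ω)) ^ 2 ∂μ := by
        congr 1
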